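/- If the discriminator cannot distinguish generated from real samples in the sense that E_{x~p_data}[log D(x)] + E_{x~p_g}[log(1−D(x))] ≤ −log 4 for the optimal discriminator D = D*, then p_g = p_data. -/

import Mathlib

open MeasureTheory


lemma mylog_lb {x c : ℝ} (hx : 0 ≤ x) (hc : 0 < c) :
    x - c ≤ x * Real.log (x / c) := by
  rcases eq_or_lt_of_le hx with h | h
  · simp [← h]; linarith
  · have h0 : 0 < c / x := div_pos hc h
    have h1 := Real.log_le_sub_one_of_pos h0
    have h2 : Real.log (c / x) = - Real.log (x / c) := by
      rw [← Real.log_inv]; congr 1; field_simp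
    have h3 : x * (c / x) = c := by field_simp
    nlinarith

lemma mylog_lb_strict {x c : ℝ} (hx : 0 ≤ x) (hc : 0 < c) (hne : x ≠ c) :
    x - c < x * Real.log (x / c) := by
  rcases eq_or_lt_of_le hx with h | h
  · simp [← h]; linarith
  · have h0 : 0 < c / x := div_pos hc h
    have h1 := Real.log_lt_sub_one_of_pos h0 (by
      intro hcx
      apply hne
      field_simp at hcx
      linarith)
    have h2 : Real.log (c / x) = - Real.log (x / c) := by
      rw [← Real.log_inv]; congr 1; field_simp
    have h3 : x * (c / x) = c := by field_simp
    nlinarith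

lemma pt_nonneg {a b : ℝ} (ha : 0 ≤ a) (hb : 0 ≤ b) :
    0 ≤ a * Real.log (a / (a + b)) + b * Real.log (1 - a / (a + b))
      + (a + b) * Real.log 2 := by
  rcases eq_or_lt_of_le (by linarith : (0:ℝ) ≤ a + b) with h | h
  · have ha0 : a = 0 := by linarith
    have hb0 : b = 0 := by linarith
    simp [ha0, hb0]
  · have hrw : 1 - a / (a + b) = b / (a + b) := by field_simp; ring
    have hc : 0 < (a + b) / 2 := by linarith
    have key : ∀ z : ℝ, 0 ≤ z →
        z * Real.log (z / ((a+b)/2)) = z * Real.log (z / (a + b)) + z * Real.log 2 := by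
      intro z hz
      rcases eq_or_lt_of_le hz with h0 | h0
      · simp [← h0]
      · have : z / ((a+b)/2) = z / (a + b) * 2 := by field_simp
        rw [this, Real.log_mul (by positivity) two_ne_zero]
        ring
    have l1 := mylog_lb ha hc
    have l2 := mylog_lb hb hc
    rw [hrw]
    have e1 := key a ha
    have e2 := key b hb
    nlinarith

lemma pt_eq {a b : ℝ} (ha : 0 ≤ a) (hb : 0 ≤ b)
    (h0 : a * Real.log (a / (a + b)) + b * Real.log (1 - a / (a + b))
      + (a + b) * Real.log 2 = 0) : a = b := by
  rcases eq_or_lt_of_le (by linarith : (0:ℝ) ≤ a + b) with h | h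
  · linarith
  · by_contra hne
    have hrw : 1 - a / (a + b) = b / (a + b) := by field_simp; ring
    have hc : 0 < (a + b) / 2 := by linarith
    have key : ∀ z : ℝ, 0 ≤ z →
        z * Real.log (z / ((a+b)/2)) = z * Real.log (z / (a + b)) + z * Real.log 2 := by
      intro z hz
      rcases eq_or_lt_of_le hz with h0 | h0
      · simp [← h0]
      · have : z / ((a+b)/2) = z / (a + b) * 2 := by field_simp
        rw [this, Real.log_mul (by positivity) two_ne_zero]
        ring
    have hane : a ≠ (a+b)/2 := fun hEq => hne (by linarith)
    have hbne : b ≠ (a+b)/2 := fun hEq => hne (by linarith)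
    have l1 := mylog_lb_strict ha hc hane
    have l2 := mylog_lb_strict hb hc hbne
    rw [hrw] at h0
    have e1 := key a ha
    have e2 := key b hb
    nlinarith

/-- If the optimal-discriminator objective satisfies
E_{p_data}[log D*] + E_{p_g}[log(1−D*)] ≤ −log 4, where
D*(x) = p_data(x)/(p_data(x)+p_g(x)), then p_g = p_data. -/
theorem indistinguishable_implies_equal {X : Type*} [MeasurableSpace X]
    (μ : Measure X) [SigmaFinite μ] (p q : X → ℝ)
    (hp : ∀ x, 0 ≤ p x) (hq : ∀ x, 0 ≤ q x)
    (hpm : Measurable p) (hqm : Measurable q)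
    (hp1 : ∫ x, p x ∂μ = 1) (hq1 : ∫ x, q x ∂μ = 1)
    (hobj : (∫ x, p x * Real.log (p x / (p x + q x)) ∂μ) +
        (∫ x, q x * Real.log (1 - p x / (p x + q x)) ∂μ) ≤ -Real.log 4) :
    μ.withDensity (fun x => ENNReal.ofReal (q x)) =
      μ.withDensity (fun x => ENNReal.ofReal (p x)) := by
  have hpInt : Integrable p μ := by
    by_contra h; rw [integral_undef h] at hp1; norm_num at hp1
  have hqInt : Integrable q μ := by
    by_contra h; rw [integral_undef h] at hq1; norm_num at hq1
  set A : X → ℝ := fun x => p x * Real.log (p x / (p x + q x)) with hA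
  set B : X → ℝ := fun x => q x * Real.log (1 - p x / (p x + q x)) with hB
  -- pointwise sign facts
  have hratio : ∀ x, 0 ≤ p x / (p x + q x) ∧ p x / (p x + q x) ≤ 1 := by
    intro x
    constructor
    · exact div_nonneg (hp x) (add_nonneg (hp x) (hq x))
    · rcases eq_or_lt_of_le (by nlinarith [hp x, hq x] : (0:ℝ) ≤ p x + q x) with h | h
      · simp [← h]
      · rw [div_le_one h]; nlinarith [hq x]
  have hAle : ∀ x, A x ≤ 0 := fun x => by
    have := Real.log_nonpos (hratio x).1 (hratio x).2
    have := hp x; simp only [hA]; nlinarith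
  have hBle : ∀ x, B x ≤ 0 := fun x => by
    have h1 : (0:ℝ) ≤ 1 - p x / (p x + q x) := by linarith [(hratio x).2]
    have h2 : 1 - p x / (p x + q x) ≤ 1 := by linarith [(hratio x).1]
    have := Real.log_nonpos h1 h2
    have := hq x; simp only [hB]; nlinarith
  have hGpt : ∀ x, 0 ≤ A x + B x + (p x + q x) * Real.log 2 :=
    fun x => pt_nonneg (hp x) (hq x)
  -- measurability
  have hAm : Measurable A :=
    hpm.mul ((hpm.div (hpm.add hqm)).log)
  have hBm : Measurable B :=
    hqm.mul ((measurable_const.sub (hpm.div (hpm.add hqm))).log)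
  have hbndInt : Integrable (fun x => (p x + q x) * Real.log 2) μ :=
    (hpInt.add hqInt).mul_const _
  have hAInt : Integrable A μ := by
    refine hbndInt.mono' hAm.aestronglyMeasurable (ae_of_all _ fun x => ?_)
    rw [Real.norm_eq_abs, abs_of_nonpos (hAle x)]
    have := hGpt x; have := hBle x; linarith
  have hBInt : Integrable B μ := by
    refine hbndInt.mono' hBm.aestronglyMeasurable (ae_of_all _ fun x => ?_)
    rw [Real.norm_eq_abs, abs_of_nonpos (hBle x)]
    have := hGpt x; have := hAle x; linarith
  set G : X → ℝ := fun x => A x + B x + (p x + q x) * Real.log 2 with hGdef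
  have hGInt : Integrable G μ := (hAInt.add hBInt).add hbndInt
  have hGint0 : ∫ x, G x ∂μ = 0 := by
    have h1a : ∫ x, G x ∂μ =
        (∫ x, A x + B x ∂μ) + ∫ x, (p x + q x) * Real.log 2 ∂μ :=
      integral_add (hAInt.add hBInt) hbndInt
    have h1b : ∫ x, A x + B x ∂μ = (∫ x, A x ∂μ) + ∫ x, B x ∂μ :=
      integral_add hAInt hBInt
    have h1 : ∫ x, G x ∂μ =
        (∫ x, A x ∂μ) + (∫ x, B x ∂μ) + ∫ x, (p x + q x) * Real.log 2 ∂μ := by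
      rw [h1a, h1b]
    have h2 : ∫ x, (p x + q x) * Real.log 2 ∂μ = 2 * Real.log 2 := by
      rw [integral_mul_const, integral_add hpInt hqInt, hp1, hq1]; ring
    have h4 : Real.log 4 = 2 * Real.log 2 := by
      rw [show (4:ℝ) = 2 ^ 2 by norm_num, Real.log_pow]; push_cast; ring
    have hle : ∫ x, G x ∂μ ≤ 0 := by
      rw [h1, h2]; rw [h4] at hobj; linarith
    have hge : 0 ≤ ∫ x, G x ∂μ := integral_nonneg hGpt
    linarith
  have hae : G =ᵐ[μ] 0 := by
    have := (integral_eq_zero_iff_of_nonneg hGpt hGInt).mp hGint0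
    exact this
  have hpq : (fun x => ENNReal.ofReal (q x)) =ᵐ[μ] fun x => ENNReal.ofReal (p x) := by
    filter_upwards [hae] with x hx
    have : p x = q x := pt_eq (hp x) (hq x) hx
    rw [this]
  exact withDensity_congr_ae hpq
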